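/- In the model graph G, a vertex has a finite neighbour set if and only if it is a triangle-vertex, and every triangle-vertex of G has degree exactly 6 (it is adjacent to the three dual vertices x̃ with x ∈ T and to the exactly three triangles sharing an edge with T). -/

import Mathlib

/-- Adjacency relation of the Farey graph on `Option ℚ`: `some x` and `some y` are
adjacent iff `|x.num * y.den - y.num * x.den| = 1`, and `none` (representing `∞`)
is adjacent to `some x` iff `x.den = 1`. -/
def fareyAdj : Option ℚ → Option ℚ → Prop
  | some x, some y => |x.num * (y.den : ℤ) - y.num * (x.den : ℤ)| = 1
  | some x, none => x.den = 1
  | none, some x => x.den = 1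
  | none, none => False

/-- The Farey graph `𝔽` on the vertex set `Option ℚ`. -/
def fareyGraph : SimpleGraph (Option ℚ) where
  Adj := fareyAdj
  symm := ⟨by
    rintro (_ | x) (_ | y) h
    · exact h.elim
    · exact h
    · exact h
    · show |y.num * (x.den : ℤ) - x.num * (y.den : ℤ)| = 1
      rw [abs_sub_comm]
      exact h⟩
  loopless := ⟨by
    rintro (_ | x) h
    · exact h.elim
    · have : |x.num * (x.den : ℤ) - x.num * (x.den : ℤ)| = 1 := h
      simp at this⟩

/-- A triangle of the Farey graph: a 3-element clique. -/
def FareyTriangle : Type := {s : Finset (Option ℚ) // fareyGraph.IsNClique 3 s}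

/-- The Farey dual graph `𝔽*`: vertices are the triangles of the Farey graph, two
triangles being adjacent iff they are distinct and share exactly two vertices. -/
def fareyDual : SimpleGraph FareyTriangle where
  Adj T T' := T ≠ T' ∧ (T.1 ∩ T'.1).card = 2
  symm := ⟨by
    rintro T T' ⟨h1, h2⟩
    exact ⟨h1.symm, by rwa [Finset.inter_comm]⟩⟩
  loopless := ⟨fun T h => h.1 rfl⟩

/-- Vertices of the model graph: Farey vertices `.inl x`, dual vertices
`.inr (.inl x)` (written `x̃`), and triangle-vertices `.inr (.inr T)`. -/
abbrev ModelVertex : Type := Option ℚ ⊕ (Option ℚ ⊕ FareyTriangle)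

/-- Adjacency relation of the model graph `G`. -/
def modelAdj : ModelVertex → ModelVertex → Prop
  | .inl x, .inl y => fareyGraph.Adj x y
  | .inl x, .inr (.inl y) => x = y
  | .inr (.inl x), .inl y => x = y
  | .inr (.inl x), .inr (.inr T) => x ∈ T.1
  | .inr (.inr T), .inr (.inl x) => x ∈ T.1
  | .inr (.inr T), .inr (.inr T') => T ≠ T' ∧ (T.1 ∩ T'.1).card = 2
  | _, _ => False

/-- The model graph `G` of the pants graph of `N₃`: on `V(𝔽) ⊔ V(𝔽) ⊔ T(𝔽)`, with
edges `x—y` for `x, y` adjacent in `𝔽`, `x̃—x`, `x̃—T` whenever `x ∈ T`, and `T—T'`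
whenever `T ≠ T'` and `|T ∩ T'| = 2`. -/
def modelGraph : SimpleGraph ModelVertex where
  Adj := modelAdj
  symm := ⟨by
    rintro (x | x | T) (y | y | T') h
    · exact fareyGraph.adj_symm h
    · exact h.symm
    · exact h.elim
    · exact h.symm
    · exact h.elim
    · exact h
    · exact h.elim
    · exact h
    · exact ⟨h.1.symm, by
        have := h.2
        rwa [Finset.inter_comm]⟩⟩
  loopless := ⟨by
    rintro (x | x | T) h
    · exact fareyGraph.irrefl h
    · exact h.elim
    · exact h.1 rfl⟩

section Pairs

/-- Pair representation of a Farey vertex. -/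
def toPair : Option ℚ → ℤ × ℤ
  | none => (1, 0)
  | some x => (x.num, (x.den : ℤ))

lemma toPair_snd_nonneg (v : Option ℚ) : 0 ≤ (toPair v).2 := by
  cases v with
  | none => simp [toPair]
  | some x => exact Int.ofNat_nonneg _

lemma toPair_fst_of_snd_eq_zero {v : Option ℚ} (h : (toPair v).2 = 0) :
    (toPair v).1 = 1 := by
  cases v with
  | none => rfl
  | some x => exact absurd (Nat.cast_eq_zero.mp h) x.den_nz

lemma toPair_gcd (v : Option ℚ) : Int.gcd (toPair v).1 (toPair v).2 = 1 := by
  cases v with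
  | none => simp [toPair]
  | some x =>
    show Int.gcd x.num (x.den : ℤ) = 1
    simpa [Int.gcd, Int.natAbs_natCast] using x.reduced

lemma toPair_injective : Function.Injective toPair := by
  rintro (_ | x) (_ | y) h
  · rfl
  · exfalso
    have h2 : (0 : ℤ) = (y.den : ℤ) := congrArg Prod.snd h
    exact y.den_nz (by exact_mod_cast h2.symm)
  · exfalso
    have h2 : (x.den : ℤ) = 0 := congrArg Prod.snd h
    exact x.den_nz (by exact_mod_cast h2)
  · have h1 : x.num = y.num := congrArg Prod.fst h
    have h2 : (x.den : ℤ) = (y.den : ℤ) := congrArg Prod.snd h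
    have h2' : x.den = y.den := by exact_mod_cast h2
    exact congrArg _ (Rat.ext h1 h2')

lemma farey_adj_iff {u v : Option ℚ} :
    fareyGraph.Adj u v ↔
      |(toPair u).1 * (toPair v).2 - (toPair v).1 * (toPair u).2| = 1 := by
  cases u with
  | none =>
    cases v with
    | none => simp [fareyGraph, fareyAdj, toPair]
    | some y =>
      show fareyAdj none (some y) ↔ _
      simp only [fareyAdj, toPair]
      constructor
      · intro h; simp [h]
      · intro h
        have : |(y.den : ℤ)| = 1 := by
          have : (1 : ℤ) * 0 - y.num * 0 = 0 := by ring
          simpa using h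
        have : (y.den : ℤ) = 1 := by
          rwa [abs_of_nonneg (Int.ofNat_nonneg _)] at this
        exact_mod_cast this
  | some x =>
    cases v with
    | none =>
      show fareyAdj (some x) none ↔ _
      simp only [fareyAdj, toPair]
      constructor
      · intro h; simp [h]
      · intro h
        have h' : |(x.den : ℤ)| = 1 := by simpa using h
        have : (x.den : ℤ) = 1 := by
          rwa [abs_of_nonneg (Int.ofNat_nonneg _)] at h'
        exact_mod_cast this
    | some y => exact Iff.rfl

/-- `v` is represented (up to sign) by the integer pair `(a, b)`. -/
def PairRep (v : Option ℚ) (a b : ℤ) : Prop :=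
  toPair v = (a, b) ∨ toPair v = (-a, -b)

/-- Build a Farey vertex from a coprime pair. -/
lemma exists_pairRep (a b : ℤ) (h : Int.gcd a b = 1) : ∃ v, PairRep v a b := by
  rcases lt_trichotomy b 0 with hb | hb | hb
  · refine ⟨some (Rat.mk' (-a) (-b).toNat ?_ ?_), Or.inr ?_⟩
    · simpa using (by omega : (-b).toNat ≠ 0)
    · show Nat.Coprime (-a).natAbs (-b).toNat
      rw [show (-b).toNat = (-b).natAbs from by omega]
      simpa [Int.gcd, Int.natAbs_neg] using h
    · show ((-a : ℤ), ((-b).toNat : ℤ)) = (-a, -b)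
      rw [Int.toNat_of_nonneg (by omega)]
  · subst hb
    simp only [Int.gcd, Int.natAbs_zero, Nat.gcd_zero_right] at h
    rcases Int.natAbs_eq_iff.mp h with ha | ha
    · exact ⟨none, Or.inl (by simp [toPair, ha])⟩
    · exact ⟨none, Or.inr (by simp [toPair, ha])⟩
  · refine ⟨some (Rat.mk' a b.toNat ?_ ?_), Or.inl ?_⟩
    · simpa using (by omega : b.toNat ≠ 0)
    · show Nat.Coprime a.natAbs b.toNat
      rw [show b.toNat = b.natAbs from by omega]
      exact h
    · show ((a : ℤ), (b.toNat : ℤ)) = (a, b)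
      rw [Int.toNat_of_nonneg (by omega)]

lemma pairRep_unique {v w : Option ℚ} {a b : ℤ}
    (hv : PairRep v a b) (hw : PairRep w a b) : v = w := by
  have key : ∀ {x y : Option ℚ}, toPair x = (a, b) → toPair y = (-a, -b) → False := by
    intro x y hx hy
    have hb1 : 0 ≤ b := by have := toPair_snd_nonneg x; rw [hx] at this; exact this
    have hb2 : 0 ≤ -b := by have := toPair_snd_nonneg y; rw [hy] at this; exact this
    have hb : b = 0 := by omega
    have h1 : a = 1 := by
      have := toPair_fst_of_snd_eq_zero (v := x) (by rw [hx]; exact hb)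
      rwa [hx] at this
    have h2 : -a = 1 := by
      have := toPair_fst_of_snd_eq_zero (v := y) (by rw [hy]; simp [hb])
      rwa [hy] at this
    omega
  rcases hv with hv | hv <;> rcases hw with hw | hw
  · exact toPair_injective (hv.trans hw.symm)
  · exact (key hv hw).elim
  · exact (key hw hv).elim
  · exact toPair_injective (hv.trans hw.symm)

lemma adj_of_pairRep {u w : Option ℚ} {a b c d : ℤ}
    (hu : PairRep u a b) (hw : PairRep w c d) (h : |a * d - c * b| = 1) :
    fareyGraph.Adj u w := by
  rw [farey_adj_iff]
  rcases hu with hu | hu <;> rcases hw with hw | hw <;> rw [hu, hw]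
  · exact h
  · rw [show a * -d - -c * b = -(a * d - c * b) by ring, abs_neg]; exact h
  · rw [show -a * d - c * -b = -(a * d - c * b) by ring, abs_neg]; exact h
  · rw [show -a * -d - -c * -b = a * d - c * b by ring]; exact h

end Pairs
section Common

/-- Any common neighbour of an edge is represented by the sum or difference pair. -/
lemma common_nbr_rep {u v w : Option ℚ} (huv : fareyGraph.Adj u v)
    (hu : fareyGraph.Adj u w) (hv : fareyGraph.Adj v w) :
    PairRep w ((toPair u).1 + (toPair v).1) ((toPair u).2 + (toPair v).2) ∨
    PairRep w ((toPair u).1 - (toPair v).1) ((toPair u).2 - (toPair v).2) := by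
  rw [farey_adj_iff] at huv hu hv
  obtain ⟨a, b, hw⟩ : ∃ a b, toPair w = (a, b) := ⟨_, _, rfl⟩
  rw [hw] at hu hv
  set p := (toPair u).1 with hp
  set q := (toPair u).2 with hq
  set r := (toPair v).1 with hr
  set s := (toPair v).2 with hs
  simp only at hu hv
  have ha : (p * s - r * q) * a = r * (p * b - a * q) - p * (r * b - a * s) := by ring
  have hb : (p * s - r * q) * b = s * (p * b - a * q) - q * (r * b - a * s) := by ring
  simp only [PairRep, hw, Prod.mk.injEq]
  rcases (abs_eq (by norm_num : (0:ℤ) ≤ 1)).mp huv with he | he <;>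
    rcases (abs_eq (by norm_num : (0:ℤ) ≤ 1)).mp hu with hε | hε <;>
      rcases (abs_eq (by norm_num : (0:ℤ) ≤ 1)).mp hv with hδ | hδ <;>
        rw [he, hε, hδ] at ha hb <;> omega

end Common
section CommonTwo

/-- Every edge of the Farey graph has exactly two common neighbours. -/
lemma common_two {u v : Option ℚ} (h : fareyGraph.Adj u v) :
    ∃ w₁ w₂ : Option ℚ, w₁ ≠ w₂ ∧
      ∀ w, (fareyGraph.Adj u w ∧ fareyGraph.Adj v w) ↔ (w = w₁ ∨ w = w₂) := by
  have he := farey_adj_iff.mp h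
  set p := (toPair u).1 with hp
  set q := (toPair u).2 with hq
  set r := (toPair v).1 with hr
  set s := (toPair v).2 with hs
  have hu : PairRep u p q := Or.inl rfl
  have hv : PairRep v r s := Or.inl rfl
  have hq0 : 0 ≤ q := toPair_snd_nonneg u
  have hs0 : 0 ≤ s := toPair_snd_nonneg v
  have hq1 : q = 0 → p = 1 := fun h0 => toPair_fst_of_snd_eq_zero h0
  have hs1 : s = 0 → r = 1 := fun h0 => toPair_fst_of_snd_eq_zero h0
  have hgs : Int.gcd (p + r) (q + s) = 1 := by
    rw [← Int.isCoprime_iff_gcd_eq_one]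
    rcases (abs_eq (by norm_num : (0:ℤ) ≤ 1)).mp he with he' | he'
    · exact ⟨-q, p, by linear_combination he'⟩
    · exact ⟨q, -p, by linear_combination -he'⟩
  have hgd : Int.gcd (p - r) (q - s) = 1 := by
    rw [← Int.isCoprime_iff_gcd_eq_one]
    rcases (abs_eq (by norm_num : (0:ℤ) ≤ 1)).mp he with he' | he'
    · exact ⟨q, -p, by linear_combination he'⟩
    · exact ⟨-q, p, by linear_combination -he'⟩
  obtain ⟨w₁, hw₁⟩ := exists_pairRep (p + r) (q + s) hgs
  obtain ⟨w₂, hw₂⟩ := exists_pairRep (p - r) (q - s) hgd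
  refine ⟨w₁, w₂, ?_, ?_⟩
  · intro heq
    rw [heq] at hw₁
    rcases hw₁ with h1 | h1 <;> rcases hw₂ with h2 | h2 <;>
      · have h3 := h1.symm.trans h2
        simp only [Prod.mk.injEq] at h3
        omega
  · intro w
    constructor
    · rintro ⟨h1, h2⟩
      rcases common_nbr_rep h h1 h2 with hrep | hrep
      · exact Or.inl (pairRep_unique hrep hw₁)
      · exact Or.inr (pairRep_unique hrep hw₂)
    · rintro (rfl | rfl)
      · refine ⟨adj_of_pairRep hu hw₁ ?_, adj_of_pairRep hv hw₁ ?_⟩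
        · rw [show p * (q + s) - (p + r) * q = p * s - r * q by ring]; exact he
        · rw [show r * (q + s) - (p + r) * s = -(p * s - r * q) by ring, abs_neg]; exact he
      · refine ⟨adj_of_pairRep hu hw₂ ?_, adj_of_pairRep hv hw₂ ?_⟩
        · rw [show p * (q - s) - (p - r) * q = -(p * s - r * q) by ring, abs_neg]; exact he
        · rw [show r * (q - s) - (p - r) * s = -(p * s - r * q) by ring, abs_neg]; exact he

/-- Given a triangle `u, v, c`, there is exactly one other common neighbour of `u, v`. -/
lemma other_common {u v c : Option ℚ} (huv : fareyGraph.Adj u v)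
    (huc : fareyGraph.Adj u c) (hvc : fareyGraph.Adj v c) :
    ∃ z, fareyGraph.Adj u z ∧ fareyGraph.Adj v z ∧ z ≠ c ∧
      ∀ w, fareyGraph.Adj u w → fareyGraph.Adj v w → w = c ∨ w = z := by
  obtain ⟨w₁, w₂, hne, hiff⟩ := common_two huv
  rcases (hiff c).mp ⟨huc, hvc⟩ with rfl | rfl
  · refine ⟨w₂, ((hiff w₂).mpr (Or.inr rfl)).1, ((hiff w₂).mpr (Or.inr rfl)).2,
      hne.symm, fun w h1 h2 => ?_⟩
    exact (hiff w).mp ⟨h1, h2⟩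
  · refine ⟨w₁, ((hiff w₁).mpr (Or.inl rfl)).1, ((hiff w₁).mpr (Or.inl rfl)).2,
      hne, fun w h1 h2 => ?_⟩
    exact ((hiff w).mp ⟨h1, h2⟩).symm

end CommonTwo
section Fan

lemma pairRep_pos {w : Option ℚ} {a b : ℤ} (h : PairRep w a b) (hb : 0 < b) :
    toPair w = (a, b) := by
  rcases h with h | h
  · exact h
  · exfalso
    have := toPair_snd_nonneg w
    rw [h] at this
    simp only at this
    omega

/-- Every Farey vertex has an infinite "fan" of neighbours, consecutive ones adjacent. -/
lemma farey_fan (v : Option ℚ) :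
    ∃ g : ℕ → Option ℚ, Function.Injective g ∧ (∀ n, fareyGraph.Adj v (g n)) ∧
      ∀ n, fareyGraph.Adj (g n) (g (n + 1)) := by
  set p := (toPair v).1 with hp
  set q := (toPair v).2 with hq
  have hv : PairRep v p q := Or.inl rfl
  have hq0 : 0 ≤ q := toPair_snd_nonneg v
  have hq1 : q = 0 → p = 1 := fun h0 => toPair_fst_of_snd_eq_zero h0
  obtain ⟨x, y, hxy⟩ := Int.isCoprime_iff_gcd_eq_one.mpr (toPair_gcd v)
  -- p * b0 - q * a0 = 1
  set a0 : ℤ := -y with ha0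
  set b0 : ℤ := x with hb0
  have hbez : p * b0 - q * a0 = 1 := by rw [ha0, hb0]; linear_combination hxy
  have hb01 : q = 0 → b0 = 1 := by
    intro h0
    have hp1 := hq1 h0
    rw [h0, hp1] at hbez
    omega
  set N : ℤ := ((1 - b0).toNat : ℤ) with hN
  have hpos : ∀ n : ℕ, 0 < b0 + (N + n) * q := by
    intro n
    rcases hq0.lt_or_eq with hq' | hq'
    · have h1 : (1 : ℤ) - b0 ≤ N := by rw [hN]; exact Int.self_le_toNat _
      have h2 : (0:ℤ) ≤ N + n := by positivity
      nlinarith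
    · rw [← hq']
      have := hb01 hq'.symm
      omega
  have hg : ∀ n : ℕ, Int.gcd (a0 + (N + n) * p) (b0 + (N + n) * q) = 1 := by
    intro n
    rw [← Int.isCoprime_iff_gcd_eq_one]
    exact ⟨-q, p, by linear_combination hbez⟩
  choose g hgrep using fun n => exists_pairRep _ _ (hg n)
  have hgp : ∀ n, toPair (g n) = (a0 + (N + n) * p, b0 + (N + n) * q) :=
    fun n => pairRep_pos (hgrep n) (hpos n)
  refine ⟨g, ?_, ?_, ?_⟩
  · intro n m hnm
    have h2 := (hgp n).symm.trans ((congrArg toPair hnm).trans (hgp m))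
    simp only [Prod.mk.injEq] at h2
    have e1 : ((N + n) - (N + m)) * p = 0 := by linear_combination h2.1
    have e2 : ((N + n) - (N + m)) * q = 0 := by linear_combination h2.2
    rcases mul_eq_zero.mp e1 with h | h
    · omega
    · rcases mul_eq_zero.mp e2 with h' | h'
      · omega
      · exact absurd (hq1 h') (by rw [h]; norm_num)
  · intro n
    refine adj_of_pairRep hv (Or.inl (hgp n)) ?_
    rw [show p * (b0 + (N + n) * q) - (a0 + (N + n) * p) * q
        = p * b0 - q * a0 by ring, hbez]
    norm_num
  · intro n
    refine adj_of_pairRep (Or.inl (hgp n)) (Or.inl (hgp (n + 1))) ?_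
    rw [show (a0 + (N + n) * p) * (b0 + (N + (n + 1 : ℕ)) * q)
        - (a0 + (N + (n + 1 : ℕ)) * p) * (b0 + (N + n) * q)
        = -(p * b0 - q * a0) by push_cast; ring, hbez]
    norm_num

end Fan
section Infinite


lemma farey_neighborSet_infinite (v : Option ℚ) :
    (fareyGraph.neighborSet v).Infinite := by
  obtain ⟨g, hinj, hadj, _⟩ := farey_fan v
  exact Set.infinite_of_injective_forall_mem hinj hadj

lemma farey_triangles_infinite (x : Option ℚ) :
    {T : FareyTriangle | x ∈ T.1}.Infinite := by
  obtain ⟨g, hinj, hadj, hcons⟩ := farey_fan x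
  have hne : ∀ n, g n ≠ x := fun n => (fareyGraph.ne_of_adj (hadj n)).symm
  have hclique : ∀ n : ℕ, fareyGraph.IsNClique 3 {x, g n, g (n + 1)} := by
    intro n
    rw [SimpleGraph.is3Clique_triple_iff]
    exact ⟨hadj n, hadj (n + 1), hcons n⟩
  set T : ℕ → FareyTriangle := fun n => ⟨{x, g n, g (n + 1)}, hclique n⟩ with hT
  have hTinj : Function.Injective T := by
    intro n m hnm
    have h1 : ({x, g n, g (n + 1)} : Finset (Option ℚ)) = {x, g m, g (m + 1)} :=
      congrArg Subtype.val hnm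
    have h2 : g n ∈ ({x, g m, g (m + 1)} : Finset (Option ℚ)) := by
      rw [← h1]; simp
    have h3 : g (n + 1) ∈ ({x, g m, g (m + 1)} : Finset (Option ℚ)) := by
      rw [← h1]; simp
    simp only [Finset.mem_insert, Finset.mem_singleton] at h2 h3
    rcases h2 with h2 | h2 | h2
    · exact absurd h2 (hne n)
    · exact hinj h2
    · exfalso
      have hnm1 : n = m + 1 := hinj h2
      rcases h3 with h3 | h3 | h3
      · exact hne (n + 1) h3
      · have := hinj h3; omega
      · have := hinj h3; omega
  exact Set.infinite_of_injective_forall_mem hTinj (fun n => by show x ∈ ({x, g n, g (n + 1)} : Finset (Option ℚ)); simp)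

lemma model_inl_infinite (x : Option ℚ) :
    (modelGraph.neighborSet (Sum.inl x)).Infinite := by
  have h1 : (Sum.inl '' (fareyGraph.neighborSet x) : Set ModelVertex) ⊆
      modelGraph.neighborSet (Sum.inl x) := by
    rintro _ ⟨y, hy, rfl⟩
    exact hy
  exact Set.Infinite.mono h1
    ((farey_neighborSet_infinite x).image (Sum.inl_injective.injOn))

lemma model_dual_infinite (x : Option ℚ) :
    (modelGraph.neighborSet (Sum.inr (Sum.inl x))).Infinite := by
  have h1 : ((fun T => Sum.inr (Sum.inr T)) '' {T : FareyTriangle | x ∈ T.1} : Set ModelVertex)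
      ⊆ modelGraph.neighborSet (Sum.inr (Sum.inl x)) := by
    rintro _ ⟨T, hT, rfl⟩
    exact hT
  refine Set.Infinite.mono h1 ((farey_triangles_infinite x).image ?_)
  intro a _ b _ h
  simpa using h

end Infinite
section Triangles

instance : DecidableEq FareyTriangle := fun T T' =>
  decidable_of_iff (T.1 = T'.1) Subtype.ext_iff.symm

lemma pair_subset_three {α : Type*} [DecidableEq α] {s : Finset α} {a b c : α}
    (hsub : s ⊆ {a, b, c}) (hcard : s.card = 2) :
    s = {a, b} ∨ s = {a, c} ∨ s = {b, c} := by
  obtain ⟨x, y, hxy, rfl⟩ := Finset.card_eq_two.mp hcard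
  have hx : x ∈ ({a, b, c} : Finset α) := hsub (by simp)
  have hy : y ∈ ({a, b, c} : Finset α) := hsub (by simp)
  simp only [Finset.mem_insert, Finset.mem_singleton] at hx hy
  rcases hx with rfl | rfl | rfl <;> rcases hy with rfl | rfl | rfl <;>
    first
      | exact (hxy rfl).elim
      | exact Or.inl rfl
      | exact Or.inl (Finset.pair_comm _ _)
      | exact Or.inr (Or.inl rfl)
      | exact Or.inr (Or.inl (Finset.pair_comm _ _))
      | exact Or.inr (Or.inr rfl)
      | exact Or.inr (Or.inr (Finset.pair_comm _ _))

lemma third_elt {T' : FareyTriangle} {u v : Option ℚ} (huv : u ≠ v)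
    (hsub : ({u, v} : Finset (Option ℚ)) ⊆ T'.1) :
    ∃ z, z ≠ u ∧ z ≠ v ∧ T'.1 = {u, v, z} ∧
      fareyGraph.Adj u z ∧ fareyGraph.Adj v z := by
  have hcard := T'.2.2
  have hnsub : ¬ T'.1 ⊆ ({u, v} : Finset (Option ℚ)) := by
    intro h
    have h1 := Finset.card_le_card h
    rw [hcard, Finset.card_pair huv] at h1
    omega
  obtain ⟨z, hz1, hz2⟩ := Finset.not_subset.mp hnsub
  simp only [Finset.mem_insert, Finset.mem_singleton, not_or] at hz2
  have hzu : z ≠ u := hz2.1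
  have hzv : z ≠ v := hz2.2
  have hsub2 : ({u, v, z} : Finset (Option ℚ)) ⊆ T'.1 := by
    intro w hw
    simp only [Finset.mem_insert, Finset.mem_singleton] at hw
    rcases hw with rfl | rfl | rfl
    · exact hsub (by simp)
    · exact hsub (by simp)
    · exact hz1
  have hcard2 : ({u, v, z} : Finset (Option ℚ)).card = 3 := by
    rw [Finset.card_insert_of_notMem (by simp [huv, Ne.symm hzu]),
      Finset.card_insert_of_notMem (by simp [Ne.symm hzv]), Finset.card_singleton]
  have heq : ({u, v, z} : Finset (Option ℚ)) = T'.1 :=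
    Finset.eq_of_subset_of_card_le hsub2 (by rw [hcard, hcard2])
  refine ⟨z, hzu, hzv, heq.symm, ?_, ?_⟩
  · exact T'.2.1 (Finset.mem_coe.mpr (hsub (by simp))) (Finset.mem_coe.mpr hz1) hzu.symm
  · exact T'.2.1 (Finset.mem_coe.mpr (hsub (by simp))) (Finset.mem_coe.mpr hz1) hzv.symm

/-- Explicit description of the neighbour set of a triangle-vertex. -/
lemma triangle_nbhd (T : FareyTriangle) :
    ∃ s : Finset ModelVertex, s.card = 6 ∧
      modelGraph.neighborSet (.inr (.inr T)) = ↑s := by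
  obtain ⟨a, b, c, hab, hac, hbc, habc⟩ := Finset.card_eq_three.mp T.2.2
  obtain ⟨hAab, hAac, hAbc⟩ := SimpleGraph.is3Clique_triple_iff.mp (habc ▸ T.2)
  obtain ⟨z₁, hz₁a, hz₁b, hz₁c, hz₁u⟩ := other_common hAab hAac hAbc
  obtain ⟨z₂, hz₂b, hz₂c, hz₂a, hz₂u⟩ := other_common hAbc (fareyGraph.adj_symm hAab) (fareyGraph.adj_symm hAac)
  obtain ⟨z₃, hz₃a, hz₃c, hz₃b, hz₃u⟩ := other_common hAac hAab (fareyGraph.adj_symm hAbc)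
  set S₁ : FareyTriangle := ⟨{a, b, z₁}, SimpleGraph.is3Clique_triple_iff.mpr ⟨hAab, hz₁a, hz₁b⟩⟩ with hS₁
  set S₂ : FareyTriangle := ⟨{b, c, z₂}, SimpleGraph.is3Clique_triple_iff.mpr ⟨hAbc, hz₂b, hz₂c⟩⟩ with hS₂
  set S₃ : FareyTriangle := ⟨{a, c, z₃}, SimpleGraph.is3Clique_triple_iff.mpr ⟨hAac, hz₃a, hz₃c⟩⟩ with hS₃
  -- the z's are new vertices
  have hz₁a' : z₁ ≠ a := (fareyGraph.ne_of_adj hz₁a).symm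
  have hz₁b' : z₁ ≠ b := (fareyGraph.ne_of_adj hz₁b).symm
  have hz₂b' : z₂ ≠ b := (fareyGraph.ne_of_adj hz₂b).symm
  have hz₂c' : z₂ ≠ c := (fareyGraph.ne_of_adj hz₂c).symm
  have hz₃a' : z₃ ≠ a := (fareyGraph.ne_of_adj hz₃a).symm
  have hz₃c' : z₃ ≠ c := (fareyGraph.ne_of_adj hz₃c).symm
  -- distinctness of the three new triangles
  have hS₁₂ : S₁ ≠ S₂ := by
    intro h
    have h1 : ({a, b, z₁} : Finset (Option ℚ)) = {b, c, z₂} := congrArg Subtype.val h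
    have h2 : a ∈ ({b, c, z₂} : Finset (Option ℚ)) := h1 ▸ (by simp)
    simp only [Finset.mem_insert, Finset.mem_singleton] at h2
    rcases h2 with h2 | h2 | h2
    · exact hab h2
    · exact hac h2
    · exact hz₂a h2.symm
  have hS₁₃ : S₁ ≠ S₃ := by
    intro h
    have h1 : ({a, b, z₁} : Finset (Option ℚ)) = {a, c, z₃} := congrArg Subtype.val h
    have h2 : b ∈ ({a, c, z₃} : Finset (Option ℚ)) := h1 ▸ (by simp)
    simp only [Finset.mem_insert, Finset.mem_singleton] at h2
    rcases h2 with h2 | h2 | h2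
    · exact hab h2.symm
    · exact hbc h2
    · exact hz₃b h2.symm
  have hS₂₃ : S₂ ≠ S₃ := by
    intro h
    have h1 : ({b, c, z₂} : Finset (Option ℚ)) = {a, c, z₃} := congrArg Subtype.val h
    have h2 : b ∈ ({a, c, z₃} : Finset (Option ℚ)) := h1 ▸ (by simp)
    simp only [Finset.mem_insert, Finset.mem_singleton] at h2
    rcases h2 with h2 | h2 | h2
    · exact hab h2.symm
    · exact hbc h2
    · exact hz₃b h2.symm
  -- the triangles are adjacent to T in the dual
  have hTadj : ∀ (S : FareyTriangle) (u v w : Option ℚ), S.1 = {u, v, w} →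
      T.1 ∩ S.1 = {u, v} → u ≠ v → fareyGraph.Adj u w → w ∉ T.1 →
      modelGraph.Adj (.inr (.inr T)) (.inr (.inr S)) := by
    intro S u v w hSval hint huv hadj hwT
    refine ⟨?_, ?_⟩
    · intro h
      rw [← h] at hSval
      exact hwT (hSval ▸ (by simp))
    · rw [hint, Finset.card_pair huv]
  have hz₁T : z₁ ∉ T.1 := by
    rw [habc]
    simp only [Finset.mem_insert, Finset.mem_singleton]
    push_neg
    exact ⟨hz₁a', hz₁b', hz₁c⟩
  have hz₂T : z₂ ∉ T.1 := by
    rw [habc]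
    simp only [Finset.mem_insert, Finset.mem_singleton]
    push_neg
    exact ⟨hz₂a, hz₂b', hz₂c'⟩
  have hz₃T : z₃ ∉ T.1 := by
    rw [habc]
    simp only [Finset.mem_insert, Finset.mem_singleton]
    push_neg
    exact ⟨hz₃a', hz₃b, hz₃c'⟩
  have hint₁ : T.1 ∩ S₁.1 = {a, b} := by
    show T.1 ∩ ({a, b, z₁} : Finset (Option ℚ)) = {a, b}
    rw [habc]
    ext w
    simp only [Finset.mem_inter, Finset.mem_insert, Finset.mem_singleton]
    constructor
    · rintro ⟨h1, h2⟩
      rcases h1 with rfl | rfl | rfl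
      · exact Or.inl rfl
      · exact Or.inr rfl
      · rcases h2 with h2 | h2 | h2
        · exact absurd h2.symm hac
        · exact absurd h2.symm hbc
        · exact absurd h2.symm hz₁c
    · rintro (rfl | rfl)
      · exact ⟨Or.inl rfl, Or.inl rfl⟩
      · exact ⟨Or.inr (Or.inl rfl), Or.inr (Or.inl rfl)⟩
  have hint₂ : T.1 ∩ S₂.1 = {b, c} := by
    show T.1 ∩ ({b, c, z₂} : Finset (Option ℚ)) = {b, c}
    rw [habc]
    ext w
    simp only [Finset.mem_inter, Finset.mem_insert, Finset.mem_singleton]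
    constructor
    · rintro ⟨h1, h2⟩
      rcases h1 with rfl | rfl | rfl
      · rcases h2 with h2 | h2 | h2
        · exact absurd h2 hab
        · exact absurd h2 hac
        · exact absurd h2.symm hz₂a
      · exact Or.inl rfl
      · exact Or.inr rfl
    · rintro (rfl | rfl)
      · exact ⟨Or.inr (Or.inl rfl), Or.inl rfl⟩
      · exact ⟨Or.inr (Or.inr rfl), Or.inr (Or.inl rfl)⟩
  have hint₃ : T.1 ∩ S₃.1 = {a, c} := by
    show T.1 ∩ ({a, c, z₃} : Finset (Option ℚ)) = {a, c}
    rw [habc]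
    ext w
    simp only [Finset.mem_inter, Finset.mem_insert, Finset.mem_singleton]
    constructor
    · rintro ⟨h1, h2⟩
      rcases h1 with rfl | rfl | rfl
      · exact Or.inl rfl
      · rcases h2 with h2 | h2 | h2
        · exact absurd h2.symm hab
        · exact absurd h2 hbc
        · exact absurd h2.symm hz₃b
      · exact Or.inr rfl
    · rintro (rfl | rfl)
      · exact ⟨Or.inl rfl, Or.inl rfl⟩
      · exact ⟨Or.inr (Or.inr rfl), Or.inr (Or.inl rfl)⟩
  refine ⟨{.inr (.inl a), .inr (.inl b), .inr (.inl c),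
    .inr (.inr S₁), .inr (.inr S₂), .inr (.inr S₃)}, ?_, ?_⟩
  · rw [Finset.card_insert_of_notMem (by simp [hab, hac]),
      Finset.card_insert_of_notMem (by simp [hbc]),
      Finset.card_insert_of_notMem (by simp),
      Finset.card_insert_of_notMem (by simp [hS₁₂, hS₁₃]),
      Finset.card_insert_of_notMem (by simp [hS₂₃]),
      Finset.card_singleton]
  · ext v
    simp only [SimpleGraph.mem_neighborSet, Finset.coe_insert, Set.mem_insert_iff,
      Finset.coe_singleton, Set.mem_singleton_iff]
    constructor
    · intro hv
      match v with
      | Sum.inl y => exact hv.elim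
      | Sum.inr (Sum.inl y) =>
        have hy : y ∈ T.1 := hv
        rw [habc] at hy
        simp only [Finset.mem_insert, Finset.mem_singleton] at hy
        rcases hy with rfl | rfl | rfl
        · exact Or.inl rfl
        · exact Or.inr (Or.inl rfl)
        · exact Or.inr (Or.inr (Or.inl rfl))
      | Sum.inr (Sum.inr T') =>
        obtain ⟨hne, hcard⟩ := (hv : T ≠ T' ∧ (T.1 ∩ T'.1).card = 2)
        have hsub3 : T.1 ∩ T'.1 ⊆ ({a, b, c} : Finset (Option ℚ)) :=
          habc ▸ Finset.inter_subset_left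
        rcases pair_subset_three hsub3 hcard with hI | hI | hI
        · obtain ⟨z, hzu, hzv, hTval, hadj1, hadj2⟩ :=
            third_elt hab (hI ▸ Finset.inter_subset_right)
          have hzc : z ≠ c := by
            intro h
            subst h
            exact hne (Subtype.ext (habc.trans hTval.symm))
          rcases hz₁u z hadj1 hadj2 with h | h
          · exact absurd h hzc
          · refine Or.inr (Or.inr (Or.inr (Or.inl ?_)))
            subst h
            exact congrArg _ (congrArg _ (Subtype.ext hTval))
        · obtain ⟨z, hzu, hzv, hTval, hadj1, hadj2⟩ :=
            third_elt hac (hI ▸ Finset.inter_subset_right)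
          have hzb : z ≠ b := by
            intro h
            subst h
            refine hne (Subtype.ext ?_)
            rw [habc, hTval]
            ext w
            simp only [Finset.mem_insert, Finset.mem_singleton]
            tauto
          rcases hz₃u z hadj1 hadj2 with h | h
          · exact absurd h hzb
          · refine Or.inr (Or.inr (Or.inr (Or.inr (Or.inr ?_))))
            subst h
            exact congrArg _ (congrArg _ (Subtype.ext hTval))
        · obtain ⟨z, hzu, hzv, hTval, hadj1, hadj2⟩ :=
            third_elt hbc (hI ▸ Finset.inter_subset_right)
          have hza : z ≠ a := by
            intro h
            subst h
            refine hne (Subtype.ext ?_)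
            rw [habc, hTval]
            ext w
            simp only [Finset.mem_insert, Finset.mem_singleton]
            tauto
          rcases hz₂u z hadj1 hadj2 with h | h
          · exact absurd h hza
          · refine Or.inr (Or.inr (Or.inr (Or.inr (Or.inl ?_))))
            subst h
            exact congrArg _ (congrArg _ (Subtype.ext hTval))
    · rintro (rfl | rfl | rfl | rfl | rfl | rfl)
      · show a ∈ T.1
        rw [habc]; simp
      · show b ∈ T.1
        rw [habc]; simp
      · show c ∈ T.1
        rw [habc]; simp
      · exact hTadj S₁ a b z₁ rfl hint₁ hab hz₁a hz₁T
      · exact hTadj S₂ b c z₂ rfl hint₂ hbc hz₂b hz₂T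
      · exact hTadj S₃ a c z₃ rfl hint₃ hac hz₃a hz₃T

end Triangles

/-- In the model graph `G`, a vertex has a finite neighbour set iff it is a
triangle-vertex, and every triangle-vertex has degree exactly `6`. -/
theorem modelGraph_finite_degree_iff_triangle_and_degree_six :
    (∀ v : ModelVertex, (modelGraph.neighborSet v).Finite ↔
      ∃ T : FareyTriangle, v = .inr (.inr T)) ∧
    ∀ T : FareyTriangle,
      (modelGraph.neighborSet (.inr (.inr T))).ncard = 6 := by
  constructor
  · rintro (x | x | T)
    · constructor
      · intro hfin
        exact absurd hfin (model_inl_infinite x)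
      · rintro ⟨T, h⟩
        cases h
    · constructor
      · intro hfin
        exact absurd hfin (model_dual_infinite x)
      · rintro ⟨T, h⟩
        cases h
    · constructor
      · intro _
        exact ⟨T, rfl⟩
      · intro _
        obtain ⟨s, _, hs⟩ := triangle_nbhd T
        rw [hs]
        exact s.finite_toSet
  · intro T
    obtain ⟨s, hc, hs⟩ := triangle_nbhd T
    rw [hs, Set.ncard_coe_finset, hc]
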